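/- Let E be an uncountable Polish space. Then for every countable ordinal α and every nonzero natural number p, there exists a compact countable subset K of E with Cantor-Bendixson characteristic CB(K) = (α,p). -/

import Mathlib

open Set Order Topology Filter

/-- The Cantor-Bendixson derivative of a set, by transfinite recursion. -/
noncomputable def cbDeriv {X : Type*} [TopologicalSpace X] (A : Set X) (o : Ordinal) : Set X :=
  Ordinal.limitRecOn o A (fun _ ih => derivedSet ih)
    (fun o _ ih => ⋂ (b : Set.Iio o), ih b.1 b.2)

/-- `IsCB A α p` : the Cantor-Bendixson characteristic of `A` is `(α, p)`,
i.e. `α` is the least ordinal with `A^(α)` finite, and `p = |A^(α)|`. -/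
def IsCB {X : Type*} [TopologicalSpace X] (A : Set X) (α : Ordinal) (p : ℕ) : Prop :=
  (cbDeriv A α).Finite ∧ (∀ β < α, ¬ (cbDeriv A β).Finite) ∧ (cbDeriv A α).ncard = p

section basics
variable {X : Type*} [TopologicalSpace X]

theorem cbDeriv_zero (A : Set X) : cbDeriv A 0 = A := Ordinal.limitRecOn_zero _ _ _

theorem cbDeriv_succ (A : Set X) (o : Ordinal) :
    cbDeriv A (Order.succ o) = derivedSet (cbDeriv A o) := Ordinal.limitRecOn_succ _ _ _ _

theorem cbDeriv_limit (A : Set X) {o : Ordinal} (h : Order.IsSuccLimit o) :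
    cbDeriv A o = ⋂ (b : Set.Iio o), cbDeriv A b.1 := Ordinal.limitRecOn_limit _ _ _ _ h

theorem derivedSet_singleton [T1Space X] (a : X) : derivedSet ({a} : Set X) = (∅ : Set X) := by
  ext x
  simp only [mem_derivedSet, accPt_iff_nhds, Set.mem_empty_iff_false, iff_false, not_forall]
  by_cases hx : x = a
  · subst hx
    refine ⟨univ, univ_mem, ?_⟩
    rintro ⟨y, ⟨-, rfl⟩, hy⟩
    exact hy rfl
  · refine ⟨{a}ᶜ, (isOpen_compl_singleton.mem_nhds (by simpa using hx)), ?_⟩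
    rintro ⟨y, ⟨hy1, rfl⟩, -⟩
    exact hy1 rfl

theorem derivedSet_insert [T1Space X] (a : X) (A : Set X) :
    derivedSet (insert a A) = derivedSet A := by
  rw [Set.insert_eq, derivedSet_union, derivedSet_singleton, Set.empty_union]

theorem cbDeriv_isClosed [T1Space X] {A : Set X} (hA : IsClosed A) (o : Ordinal) :
    IsClosed (cbDeriv A o) := by
  induction o using Ordinal.induction with
  | _ o ih =>
    rcases Ordinal.zero_or_succ_or_isSuccLimit o with rfl | ⟨a, rfl⟩ | ho
    · rwa [cbDeriv_zero]
    · rw [cbDeriv_succ]; exact isClosed_derivedSet _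
    · rw [cbDeriv_limit A ho]; exact isClosed_iInter fun b => ih b.1 b.2

theorem cbDeriv_anti [T1Space X] {A : Set X} (hA : IsClosed A) {γ β : Ordinal} (h : γ ≤ β) :
    cbDeriv A β ⊆ cbDeriv A γ := by
  induction β using Ordinal.induction with
  | _ β ih =>
    rcases Ordinal.zero_or_succ_or_isSuccLimit β with rfl | ⟨a, rfl⟩ | hβ
    · rw [nonpos_iff_eq_zero] at h; subst h; exact Set.Subset.rfl
    · rcases eq_or_lt_of_le h with rfl | hlt
      · exact Set.Subset.rfl
      · rw [Order.lt_succ_iff] at hlt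
        refine Set.Subset.trans ?_ (ih a (Order.lt_succ a) hlt)
        rw [cbDeriv_succ]
        exact Set.Subset.trans (derivedSet_subset_closure _)
          (cbDeriv_isClosed hA a).closure_subset
    · rcases eq_or_lt_of_le h with rfl | hlt
      · exact Set.Subset.rfl
      · rw [cbDeriv_limit A hβ]
        exact Set.iInter_subset (fun b : Set.Iio β => cbDeriv A b.1) ⟨γ, hlt⟩

theorem cbDeriv_empty (o : Ordinal) : cbDeriv (∅ : Set X) o = ∅ := by
  induction o using Ordinal.induction with
  | _ o ih =>
    rcases Ordinal.zero_or_succ_or_isSuccLimit o with rfl | ⟨a, rfl⟩ | ho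
    · exact cbDeriv_zero _
    · rw [cbDeriv_succ, ih a (Order.lt_succ a)]
      rw [← Set.subset_empty_iff]
      exact Set.Subset.trans (derivedSet_subset_closure _) (by simp)
    · rw [cbDeriv_limit _ ho]
      exact Set.subset_empty_iff.mp
        (Set.Subset.trans (Set.iInter_subset _ ⟨0, ho.pos⟩) (by rw [ih 0 ho.pos]))

/-- localization of the derived set to an open set -/
theorem mem_derivedSet_inter_open {A U : Set X} (hU : IsOpen U) {x : X} (hx : x ∈ U) :
    x ∈ derivedSet A ↔ x ∈ derivedSet (A ∩ U) := by
  simp only [mem_derivedSet, accPt_iff_nhds]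
  constructor
  · intro H W hW
    obtain ⟨y, ⟨hy1, hy2⟩, hy3⟩ := H (W ∩ U) (Filter.inter_mem hW (hU.mem_nhds hx))
    exact ⟨y, ⟨hy1.1, hy2, hy1.2⟩, hy3⟩
  · intro H W hW
    obtain ⟨y, ⟨hy1, hy2⟩, hy3⟩ := H W hW
    exact ⟨y, ⟨hy1, hy2.1⟩, hy3⟩

theorem derivedSet_image {Y : Type*} [TopologicalSpace Y] {f : X → Y}
    (hf : IsClosedEmbedding f) (A : Set X) : derivedSet (f '' A) = f '' derivedSet A := by
  refine Set.Subset.antisymm ?_ (hf.continuous.image_derivedSet hf.injective)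
  intro y hy
  have hy' : y ∈ f '' closure A := by
    rw [← hf.closure_image_eq]
    exact derivedSet_subset_closure _ hy
  obtain ⟨x, -, rfl⟩ := hy'
  refine ⟨x, ?_, rfl⟩
  rw [mem_derivedSet, accPt_iff_nhds] at hy ⊢
  intro W hW
  rw [hf.isInducing.nhds_eq_comap, Filter.mem_comap] at hW
  obtain ⟨U, hU, hUW⟩ := hW
  obtain ⟨z, ⟨hz1, hz2⟩, hz3⟩ := hy U hU
  obtain ⟨a, ha, rfl⟩ := hz2
  exact ⟨a, ⟨hUW hz1, ha⟩, fun e => hz3 (by rw [e])⟩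

theorem cbDeriv_image {Y : Type*} [TopologicalSpace Y] {f : X → Y}
    (hf : IsClosedEmbedding f) (A : Set X) (o : Ordinal) :
    cbDeriv (f '' A) o = f '' cbDeriv A o := by
  induction o using Ordinal.induction with
  | _ o ih =>
    rcases Ordinal.zero_or_succ_or_isSuccLimit o with rfl | ⟨a, rfl⟩ | ho
    · rw [cbDeriv_zero, cbDeriv_zero]
    · rw [cbDeriv_succ, cbDeriv_succ, ih a (Order.lt_succ a), derivedSet_image hf]
    · rw [cbDeriv_limit _ ho, cbDeriv_limit _ ho]
      have : Nonempty (Set.Iio o) := ⟨⟨0, ho.pos⟩⟩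
      rw [(hf.injective.injOn).image_iInter_eq]
      exact Set.iInter_congr fun b => ih b.1 b.2

end basics
open Set Order Topology Filter

namespace CBConstr

/-- distinguished point: all ones -/
def pinf : ℕ → Bool := fun _ => true

/-- embedding of Cantor space onto the cylinder `1^n 0 *` -/
def eSeq (n : ℕ) (x : ℕ → Bool) : ℕ → Bool :=
  fun k => if k < n then true else if k = n then false else x (k - (n + 1))

/-- the cylinder `1^n 0 *` -/
def Vcyl (n : ℕ) : Set (ℕ → Bool) := {y | (∀ k < n, y k = true) ∧ y n = false}

theorem eSeq_mem_Vcyl (n : ℕ) (x : ℕ → Bool) : eSeq n x ∈ Vcyl n := by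
  constructor
  · intro k hk; simp [eSeq, hk]
  · simp [eSeq]

theorem eSeq_image_subset (n : ℕ) (A : Set (ℕ → Bool)) : eSeq n '' A ⊆ Vcyl n := by
  rintro y ⟨x, -, rfl⟩; exact eSeq_mem_Vcyl n x

theorem pinf_not_mem_Vcyl (n : ℕ) : pinf ∉ Vcyl n := by
  intro h
  have := h.2
  simp [pinf] at this

theorem Vcyl_eq_of_mem {x : ℕ → Bool} {n m : ℕ} (hn : x ∈ Vcyl n) (hm : x ∈ Vcyl m) : n = m := by
  rcases Nat.lt_trichotomy n m with h | h | h
  · have h1 := hm.1 n h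
    have h2 := hn.2
    rw [h1] at h2; exact absurd h2 (by simp)
  · exact h
  · have h1 := hn.1 m h
    have h2 := hm.2
    rw [h1] at h2; exact absurd h2 (by simp)

theorem mem_Vcyl_or_pinf (x : ℕ → Bool) : x = pinf ∨ ∃ n, x ∈ Vcyl n := by
  by_cases h : ∀ k, x k = true
  · left; funext k; exact h k
  · right
    push_neg at h
    have hex : ∃ k, x k = false := by
      obtain ⟨k, hk⟩ := h
      exact ⟨k, by simpa using hk⟩
    classical
    refine ⟨Nat.find hex, ?_, Nat.find_spec hex⟩
    intro k hk
    have := Nat.find_min hex hk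
    simpa using this

theorem continuous_eSeq (n : ℕ) : Continuous (eSeq n) := by
  refine continuous_pi fun k => ?_
  by_cases h1 : k < n
  · simp only [eSeq, if_pos h1]; exact continuous_const
  · by_cases h2 : k = n
    · simp only [eSeq, if_neg h1, if_pos h2]; exact continuous_const
    · simp only [eSeq, if_neg h1, if_neg h2]; exact continuous_apply _

theorem eSeq_injective (n : ℕ) : Function.Injective (eSeq n) := by
  have : Function.LeftInverse (fun (y : ℕ → Bool) (k : ℕ) => y (k + (n + 1))) (eSeq n) := by
    intro x
    funext k
    have h1 : ¬ (k + (n + 1) < n) := by omega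
    have h2 : ¬ (k + (n + 1) = n) := by omega
    simp only [eSeq, if_neg h1, if_neg h2, Nat.add_sub_cancel]
  exact this.injective

theorem eSeq_isClosedEmbedding (n : ℕ) : IsClosedEmbedding (eSeq n) :=
  (continuous_eSeq n).isClosedEmbedding (eSeq_injective n)

theorem isOpen_Vcyl (n : ℕ) : IsOpen (Vcyl n) := by
  have : Vcyl n = (⋂ k ∈ Set.Iio n, (fun y : ℕ → Bool => y k) ⁻¹' {true}) ∩
      ((fun y : ℕ → Bool => y n) ⁻¹' {false}) := by
    ext y; simp [Vcyl]
  rw [this]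
  refine IsOpen.inter ?_ ((isOpen_discrete _).preimage (continuous_apply n))
  exact (Set.finite_Iio n).isOpen_biInter fun k _ =>
    (isOpen_discrete _).preimage (continuous_apply k)

theorem isClosed_Vcyl (n : ℕ) : IsClosed (Vcyl n) := by
  have : Vcyl n = (⋂ k ∈ Set.Iio n, (fun y : ℕ → Bool => y k) ⁻¹' {true}) ∩
      ((fun y : ℕ → Bool => y n) ⁻¹' {false}) := by
    ext y; simp [Vcyl]
  rw [this]
  refine IsClosed.inter (isClosed_iInter fun k => isClosed_iInter fun _ =>
    (isClosed_discrete _).preimage (continuous_apply k))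
    ((isClosed_discrete _).preimage (continuous_apply n))

/-- the basic cylinder neighborhoods of `pinf` -/
def Ucyl (N : ℕ) : Set (ℕ → Bool) := {y | ∀ k < N, y k = true}

theorem isOpen_Ucyl (N : ℕ) : IsOpen (Ucyl N) := by
  have : Ucyl N = ⋂ k ∈ Set.Iio N, (fun y : ℕ → Bool => y k) ⁻¹' {true} := by
    ext y; simp [Ucyl]
  rw [this]
  exact (Set.finite_Iio N).isOpen_biInter fun k _ =>
    (isOpen_discrete _).preimage (continuous_apply k)

theorem pinf_mem_Ucyl (N : ℕ) : pinf ∈ Ucyl N := fun _ _ => rfl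

theorem Vcyl_subset_Ucyl {n N : ℕ} (h : N ≤ n) : Vcyl n ⊆ Ucyl N :=
  fun y hy k hk => hy.1 k (lt_of_lt_of_le hk h)

theorem exists_Ucyl_subset {W : Set (ℕ → Bool)} (hW : W ∈ 𝓝 pinf) :
    ∃ N, Ucyl N ⊆ W := by
  obtain ⟨O, hOW, hO, hpO⟩ := mem_nhds_iff.mp hW
  obtain ⟨I, u, hu, hIu⟩ := isOpen_pi_iff.mp hO pinf hpO
  obtain ⟨N, hN⟩ := I.exists_nat_subset_range
  refine ⟨N, fun y hy => hOW (hIu ?_)⟩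
  intro a ha
  have haN : a < N := by simpa using hN ha
  rw [hy a haN]
  have := (hu a ha).2
  simpa [pinf] using this

end CBConstr
namespace CBConstr

variable {K : ℕ → Set (ℕ → Bool)}

theorem iUnion_inter_Vcyl (hK : ∀ n, K n ⊆ Vcyl n) (m : ℕ) :
    (⋃ n, K n) ∩ Vcyl m = K m := by
  ext x
  constructor
  · rintro ⟨⟨_, ⟨n, rfl⟩, hxn⟩, hxm⟩
    have : n = m := Vcyl_eq_of_mem (hK n hxn) hxm
    subst this; exact hxn
  · intro hx
    exact ⟨Set.mem_iUnion.mpr ⟨m, hx⟩, hK m hx⟩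

theorem mem_derivedSet_iUnion_of_mem_Vcyl (hK : ∀ n, K n ⊆ Vcyl n) {x : ℕ → Bool} {m : ℕ}
    (hx : x ∈ Vcyl m) : x ∈ derivedSet (⋃ n, K n) ↔ x ∈ derivedSet (K m) := by
  rw [mem_derivedSet_inter_open (isOpen_Vcyl m) hx, iUnion_inter_Vcyl hK m]

theorem pinf_mem_derivedSet_iUnion (hK : ∀ n, K n ⊆ Vcyl n) :
    pinf ∈ derivedSet (⋃ n, K n) ↔ {n | (K n).Nonempty}.Infinite := by
  rw [mem_derivedSet, accPt_iff_nhds]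
  constructor
  · intro H
    by_contra hfin
    rw [Set.not_infinite] at hfin
    obtain ⟨N, hN⟩ := hfin.bddAbove
    obtain ⟨y, ⟨hy1, hy2⟩, -⟩ := H (Ucyl (N + 1)) ((isOpen_Ucyl _).mem_nhds (pinf_mem_Ucyl _))
    obtain ⟨_, ⟨n, rfl⟩, hyn⟩ := hy2
    have hnN : n ≤ N := hN ⟨y, hyn⟩
    have h1 : y n = false := (hK n hyn).2
    have h2 : y n = true := hy1 n (by omega)
    rw [h1] at h2; exact absurd h2 (by simp)
  · intro hinf U hU
    obtain ⟨N, hN⟩ := exists_Ucyl_subset hU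
    have : ∃ n ∈ {n | (K n).Nonempty}, N ≤ n := by
      by_contra hc
      push_neg at hc
      exact hinf (Set.Finite.subset (Set.finite_Iio N) fun n hn => hc n hn)
    obtain ⟨n, hn, hNn⟩ := this
    obtain ⟨y, hy⟩ := hn
    refine ⟨y, ⟨hN (Vcyl_subset_Ucyl hNn (hK n hy)), Set.mem_iUnion.mpr ⟨n, hy⟩⟩, ?_⟩
    intro he
    exact pinf_not_mem_Vcyl n (he ▸ hK n hy)

theorem derivedSet_subset_Vcyl (hK : ∀ n, K n ⊆ Vcyl n) (n : ℕ) :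
    derivedSet (K n) ⊆ Vcyl n :=
  Set.Subset.trans (derivedSet_subset_closure _)
    ((isClosed_Vcyl n).closure_subset_iff.mpr (hK n))

theorem mem_iUnion_derivedSet_of_mem_Vcyl (hK : ∀ n, K n ⊆ Vcyl n) {x : ℕ → Bool} {m : ℕ}
    (hx : x ∈ Vcyl m) : x ∈ (⋃ n, derivedSet (K n)) ↔ x ∈ derivedSet (K m) := by
  constructor
  · rintro ⟨_, ⟨n, rfl⟩, hxn⟩
    have : n = m := Vcyl_eq_of_mem (derivedSet_subset_Vcyl hK n hxn) hx
    subst this; exact hxn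
  · intro hx'; exact Set.mem_iUnion.mpr ⟨m, hx'⟩

theorem derivedSet_iUnion_of_finite (hK : ∀ n, K n ⊆ Vcyl n)
    (hfin : {n | (K n).Nonempty}.Finite) :
    derivedSet (⋃ n, K n) = ⋃ n, derivedSet (K n) := by
  ext x
  rcases mem_Vcyl_or_pinf x with rfl | ⟨m, hm⟩
  · simp only [pinf_mem_derivedSet_iUnion hK]
    constructor
    · intro hi; exact absurd hi hfin.not_infinite
    · rintro ⟨_, ⟨n, rfl⟩, hn⟩
      exact absurd (derivedSet_subset_Vcyl hK n hn) (pinf_not_mem_Vcyl n)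
  · rw [mem_derivedSet_iUnion_of_mem_Vcyl hK hm, mem_iUnion_derivedSet_of_mem_Vcyl hK hm]

theorem derivedSet_iUnion_of_infinite (hK : ∀ n, K n ⊆ Vcyl n)
    (hinf : {n | (K n).Nonempty}.Infinite) :
    derivedSet (⋃ n, K n) = insert pinf (⋃ n, derivedSet (K n)) := by
  ext x
  rcases mem_Vcyl_or_pinf x with rfl | ⟨m, hm⟩
  · constructor
    · intro _; exact Set.mem_insert _ _
    · intro _; exact (pinf_mem_derivedSet_iUnion hK).mpr hinf
  · rw [mem_derivedSet_iUnion_of_mem_Vcyl hK hm, Set.mem_insert_iff,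
      mem_iUnion_derivedSet_of_mem_Vcyl hK hm]
    have hxp : x ≠ pinf := fun he => pinf_not_mem_Vcyl m (he ▸ hm)
    simp [hxp]

/-- the intersection identity without `pinf` -/
theorem iInter_iUnion_eSeq {ι : Sort*} [Nonempty ι] (D : ι → ℕ → Set (ℕ → Bool)) :
    ⋂ i, (⋃ n, eSeq n '' D i n) = ⋃ n, eSeq n '' ⋂ i, D i n := by
  ext x
  constructor
  · intro hx
    have hx' : ∀ i, ∃ n, x ∈ eSeq n '' D i n := by
      intro i
      have := Set.mem_iInter.mp hx i
      exact Set.mem_iUnion.mp this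
    obtain ⟨i₀⟩ := ‹Nonempty ι›
    obtain ⟨m, z₀, hz₀, hze⟩ := hx' i₀
    refine Set.mem_iUnion.mpr ⟨m, z₀, Set.mem_iInter.mpr fun i => ?_, hze⟩
    obtain ⟨n, w, hw, hwe⟩ := hx' i
    have hnm : n = m := Vcyl_eq_of_mem (hwe ▸ eSeq_mem_Vcyl n w) (hze ▸ eSeq_mem_Vcyl m z₀)
    subst hnm
    have : w = z₀ := eSeq_injective n (hwe.trans hze.symm)
    subst this; exact hw
  · intro hx
    obtain ⟨_, ⟨n, rfl⟩, z, hz, rfl⟩ := hx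
    exact Set.mem_iInter.mpr fun i =>
      Set.mem_iUnion.mpr ⟨n, z, Set.mem_iInter.mp hz i, rfl⟩

/-- the intersection identity with `pinf` -/
theorem iInter_insert_iUnion_eSeq {ι : Sort*} [Nonempty ι] (D : ι → ℕ → Set (ℕ → Bool)) :
    ⋂ i, insert pinf (⋃ n, eSeq n '' D i n) = insert pinf (⋃ n, eSeq n '' ⋂ i, D i n) := by
  ext x
  by_cases hxp : x = pinf
  · subst hxp; simp
  · simp only [Set.mem_iInter, Set.mem_insert_iff, hxp, false_or]
    rw [← Set.mem_iInter, iInter_iUnion_eSeq D]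

end CBConstr
namespace CBConstr

theorem isClosed_sigmaInf {A : ℕ → Set (ℕ → Bool)} (hA : ∀ n, IsClosed (A n)) :
    IsClosed (insert pinf (⋃ n, eSeq n '' A n)) := by
  rw [← isOpen_compl_iff]
  have hcompl : (insert pinf (⋃ n, eSeq n '' A n))ᶜ
      = ⋃ n, (Vcyl n ∩ (eSeq n '' A n)ᶜ) := by
    ext x
    simp only [Set.mem_compl_iff, Set.mem_insert_iff, not_or, Set.mem_iUnion, Set.mem_inter_iff]
    constructor
    · rintro ⟨hxp, hxu⟩
      rcases mem_Vcyl_or_pinf x with rfl | ⟨m, hm⟩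
      · exact absurd rfl hxp
      · exact ⟨m, hm, fun hc => hxu ⟨m, hc⟩⟩
    · rintro ⟨n, hn, hni⟩
      refine ⟨fun he => pinf_not_mem_Vcyl n (he ▸ hn), fun hc => ?_⟩
      obtain ⟨m, z, hz, rfl⟩ := hc
      have : m = n := Vcyl_eq_of_mem (eSeq_mem_Vcyl m z) hn
      subst this; exact hni (Set.mem_image_of_mem _ hz)
  rw [hcompl]
  exact isOpen_iUnion fun n => (isOpen_Vcyl n).inter
    (((eSeq_isClosedEmbedding n).isClosedMap _ (hA n)).isOpen_compl)

theorem infinite_iUnion_eSeq {B : ℕ → Set (ℕ → Bool)} (hB : ∀ n, (B n).Nonempty) :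
    (⋃ n, eSeq n '' B n).Infinite := by
  classical
  have : ∀ n, (hB n).choose ∈ B n := fun n => (hB n).choose_spec
  refine Set.infinite_of_injective_forall_mem
    (f := fun n : ℕ => eSeq n ((hB n).choose)) ?_ ?_
  · intro a b hab
    have h1 : eSeq a ((hB a).choose) ∈ Vcyl b := by
      rw [show eSeq a ((hB a).choose) = eSeq b ((hB b).choose) from hab]
      exact eSeq_mem_Vcyl b _
    exact Vcyl_eq_of_mem (eSeq_mem_Vcyl a _) h1
  · intro n
    exact Set.mem_iUnion.mpr ⟨n, Set.mem_image_of_mem _ (this n)⟩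

theorem cbDeriv_sigmaInf {A : ℕ → Set (ℕ → Bool)} {β : Ordinal}
    (h : ∀ β' < β, {n | (cbDeriv (A n) β').Nonempty}.Infinite) :
    cbDeriv (insert pinf (⋃ n, eSeq n '' A n)) β
      = insert pinf (⋃ n, eSeq n '' cbDeriv (A n) β) := by
  induction β using Ordinal.induction with
  | _ β ih =>
    rcases Ordinal.zero_or_succ_or_isSuccLimit β with rfl | ⟨γ, rfl⟩ | hβ
    · simp only [cbDeriv_zero]
    · rw [cbDeriv_succ, ih γ (Order.lt_succ γ)
        (fun β' hβ' => h β' (hβ'.trans (Order.lt_succ γ))), derivedSet_insert]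
      rw [derivedSet_iUnion_of_infinite (fun n => eSeq_image_subset n _) ?hinf]
      · congr 1
        refine Set.iUnion_congr fun n => ?_
        rw [derivedSet_image (eSeq_isClosedEmbedding n), cbDeriv_succ]
      case hinf =>
        have := h γ (Order.lt_succ γ)
        refine this.mono fun n hn => ?_
        exact hn.image _
    · rw [cbDeriv_limit _ hβ]
      have : Nonempty (Set.Iio β) := ⟨⟨0, hβ.pos⟩⟩
      have heq : ∀ b : Set.Iio β, cbDeriv (insert pinf (⋃ n, eSeq n '' A n)) b.1
          = insert pinf (⋃ n, eSeq n '' cbDeriv (A n) b.1) := fun b =>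
        ih b.1 b.2 (fun β' hβ' => h β' (hβ'.trans b.2))
      rw [Set.iInter_congr heq, iInter_insert_iUnion_eSeq (fun (b : Set.Iio β) (n : ℕ) => cbDeriv (A n) b.1)]
      congr 1
      refine Set.iUnion_congr fun n => ?_
      rw [cbDeriv_limit _ hβ]

theorem cbDeriv_sigmaFin {A : ℕ → Set (ℕ → Bool)} (hcl : ∀ n, IsClosed (A n))
    (hfin : {n | (A n).Nonempty}.Finite) (β : Ordinal) :
    cbDeriv (⋃ n, eSeq n '' A n) β = ⋃ n, eSeq n '' cbDeriv (A n) β := by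
  induction β using Ordinal.induction with
  | _ β ih =>
    rcases Ordinal.zero_or_succ_or_isSuccLimit β with rfl | ⟨γ, rfl⟩ | hβ
    · simp only [cbDeriv_zero]
    · rw [cbDeriv_succ, ih γ (Order.lt_succ γ)]
      rw [derivedSet_iUnion_of_finite (fun n => eSeq_image_subset n _) ?hfin2]
      · refine Set.iUnion_congr fun n => ?_
        rw [derivedSet_image (eSeq_isClosedEmbedding n), cbDeriv_succ]
      case hfin2 =>
        refine hfin.subset fun n hn => ?_
        obtain ⟨y, z, hz, -⟩ := hn
        have : z ∈ A n := by
          have hsub : cbDeriv (A n) γ ⊆ A n := by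
            have := cbDeriv_anti (hcl n) (zero_le (a := γ))
            rwa [cbDeriv_zero] at this
          exact hsub hz
        exact ⟨z, this⟩
    · rw [cbDeriv_limit _ hβ]
      have : Nonempty (Set.Iio β) := ⟨⟨0, hβ.pos⟩⟩
      have heq : ∀ b : Set.Iio β, cbDeriv (⋃ n, eSeq n '' A n) b.1
          = ⋃ n, eSeq n '' cbDeriv (A n) b.1 := fun b => ih b.1 b.2
      rw [Set.iInter_congr heq, iInter_iUnion_eSeq (fun b : Set.Iio β => fun n => cbDeriv (A n) b.1)]
      refine Set.iUnion_congr fun n => ?_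
      rw [cbDeriv_limit _ hβ]

end CBConstr
namespace CBConstr

open Classical in
noncomputable def SFam : Ordinal → Set (ℕ → Bool) := fun α =>
  Ordinal.limitRecOn α ({pinf})
    (fun _ ih => insert pinf (⋃ n, eSeq n '' ih))
    (fun β _ ih =>
      if h : ∃ g : ℕ → Set.Iio β, ∀ γ < β, {n | γ < ((g n : Set.Iio β) : Ordinal)}.Infinite then
        insert pinf (⋃ n, eSeq n '' ih (h.choose n).1 (h.choose n).2)
      else ∅)

theorem SFam_zero : SFam 0 = {pinf} := Ordinal.limitRecOn_zero _ _ _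

theorem SFam_succ (γ : Ordinal) :
    SFam (Order.succ γ) = insert pinf (⋃ n, eSeq n '' SFam γ) :=
  Ordinal.limitRecOn_succ _ _ _ _

theorem SFam_limit {β : Ordinal} (hβ : Order.IsSuccLimit β)
    (hex : ∃ g : ℕ → Set.Iio β, ∀ γ < β, {n | γ < ((g n : Set.Iio β) : Ordinal)}.Infinite) :
    SFam β = insert pinf (⋃ n, eSeq n '' SFam (hex.choose n).1) := by
  unfold SFam
  rw [Ordinal.limitRecOn_limit _ _ _ _ hβ, dif_pos hex]

theorem exists_cof_seq {β : Ordinal} (hβ : Order.IsSuccLimit β) (hcard : β < (Cardinal.aleph 1).ord) :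
    ∃ g : ℕ → Set.Iio β, ∀ γ < β, {n | γ < ((g n : Set.Iio β) : Ordinal)}.Infinite := by
  have hcount : Countable (Set.Iio β) := by
    rw [← Cardinal.mk_le_aleph0_iff, Ordinal.mk_Iio_ordinal]
    have h1 : β.card < Cardinal.aleph 1 := Cardinal.lt_ord.mp hcard
    rw [← Cardinal.succ_aleph0, Order.lt_succ_iff] at h1
    exact le_trans (Cardinal.lift_le.mpr h1) (le_of_eq Cardinal.lift_aleph0)
  have hne : Nonempty (Set.Iio β) := ⟨⟨0, hβ.pos⟩⟩
  obtain ⟨h0, hsurj⟩ := exists_surjective_nat (Set.Iio β)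
  refine ⟨fun n => h0 (Nat.unpair n).2, ?_⟩
  intro γ hγ
  obtain ⟨m, hm⟩ := hsurj ⟨Order.succ γ, hβ.succ_lt hγ⟩
  refine Set.infinite_of_injective_forall_mem (f := fun k => Nat.pair k m) ?_ ?_
  · intro a b hab
    exact (Nat.pair_eq_pair.mp hab).1
  · intro k
    show γ < ((h0 (Nat.unpair (Nat.pair k m)).2 : Set.Iio β) : Ordinal)
    rw [Nat.unpair_pair, hm]
    exact Order.lt_succ γ

theorem SFam_spec {α : Ordinal} (hα : α < (Cardinal.aleph 1).ord) :
    IsClosed (SFam α) ∧ (SFam α).Countable ∧ cbDeriv (SFam α) α = {pinf} ∧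
      ∀ β < α, (cbDeriv (SFam α) β).Infinite := by
  induction α using Ordinal.induction with
  | _ α ih =>
    rcases Ordinal.zero_or_succ_or_isSuccLimit α with rfl | ⟨γ, rfl⟩ | hlim
    · rw [SFam_zero]
      refine ⟨isClosed_singleton, Set.countable_singleton _, cbDeriv_zero _, ?_⟩
      intro β hβ
      exact absurd hβ (not_lt_zero (a := β))
    · have hγ : γ < (Cardinal.aleph 1).ord := lt_trans (Order.lt_succ γ) hα
      obtain ⟨hcl, hct, hder, hinf⟩ := ih γ (Order.lt_succ γ) hγ
      rw [SFam_succ]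
      have hne : ∀ β' ≤ γ, (cbDeriv (SFam γ) β').Nonempty := by
        intro β' hβ'
        rcases lt_or_eq_of_le hβ' with hh | rfl
        · exact (hinf β' hh).nonempty
        · rw [hder]; exact ⟨pinf, rfl⟩
      have hcond : ∀ β' < Order.succ γ,
          {n : ℕ | (cbDeriv ((fun _ : ℕ => SFam γ) n) β').Nonempty}.Infinite := by
        intro β' hβ'
        have h1 := hne β' (Order.lt_succ_iff.mp hβ')
        have h2 : {n : ℕ | (cbDeriv (SFam γ) β').Nonempty} = Set.univ := by
          ext n; simpa using h1
        rw [show {n : ℕ | (cbDeriv ((fun _ : ℕ => SFam γ) n) β').Nonempty}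
            = {n : ℕ | (cbDeriv (SFam γ) β').Nonempty} from rfl, h2]
        exact Set.infinite_univ
      refine ⟨isClosed_sigmaInf (fun _ => hcl), ?_, ?_, ?_⟩
      · exact ((Set.countable_iUnion fun n => hct.image _).insert _)
      · rw [cbDeriv_sigmaInf (A := fun _ : ℕ => SFam γ) hcond, cbDeriv_succ, hder,
          derivedSet_singleton]
        simp
      · intro β hβ
        rw [cbDeriv_sigmaInf (A := fun _ : ℕ => SFam γ)
          (fun β' hβ' => hcond β' (hβ'.trans hβ))]
        exact (infinite_iUnion_eSeq (fun _ => hne β (Order.lt_succ_iff.mp hβ))).mono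
          (Set.subset_insert _ _)
    · have hex := exists_cof_seq hlim hα
      rw [SFam_limit hlim hex]
      set g := hex.choose with hgdef
      have hgs := hex.choose_spec
      have hIH : ∀ n, IsClosed (SFam (g n).1) ∧ (SFam (g n).1).Countable ∧
          cbDeriv (SFam (g n).1) (g n).1 = {pinf} ∧
          ∀ β < (g n).1, (cbDeriv (SFam (g n).1) β).Infinite :=
        fun n => ih (g n).1 (g n).2 (lt_trans (g n).2 hα)
      have hcond : ∀ β' < α,
          {n : ℕ | (cbDeriv (SFam ((g n : Set.Iio α) : Ordinal)) β').Nonempty}.Infinite := by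
        intro β' hβ'
        refine (hgs β' hβ').mono ?_
        intro n hn
        exact ((hIH n).2.2.2 β' hn).nonempty
      refine ⟨isClosed_sigmaInf (fun n => (hIH n).1), ?_, ?_, ?_⟩
      · exact ((Set.countable_iUnion fun n => (hIH n).2.1.image _).insert _)
      · rw [cbDeriv_sigmaInf (A := fun n : ℕ => SFam (g n).1) hcond]
        have hzero : ∀ n : ℕ, cbDeriv (SFam (g n).1) α = ∅ := by
          intro n
          have h1 : cbDeriv (SFam (g n).1) (Order.succ (g n).1) = ∅ := by
            rw [cbDeriv_succ, (hIH n).2.2.1, derivedSet_singleton]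
          have h2 : cbDeriv (SFam (g n).1) α ⊆ cbDeriv (SFam (g n).1) (Order.succ (g n).1) :=
            cbDeriv_anti (hIH n).1 (hlim.succ_lt (g n).2).le
          rw [h1] at h2
          exact Set.subset_empty_iff.mp h2
        simp only [hzero, Set.image_empty, Set.iUnion_empty]
        simp
      · intro β hβ
        rw [cbDeriv_sigmaInf (A := fun n : ℕ => SFam (g n).1)
          (fun β' hβ' => hcond β' (hβ'.trans hβ))]
        obtain ⟨n, hn⟩ := (hgs β hβ).nonempty
        refine (((hIH n).2.2.2 β hn).image ((eSeq_injective n).injOn)).mono ?_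
        exact Set.Subset.trans
          (Set.subset_iUnion (fun n : ℕ => eSeq n '' cbDeriv (SFam (g n).1) β) n)
          (Set.subset_insert _ _)

end CBConstr
namespace CBConstr

theorem key {α : Ordinal} (hα : α < (Cardinal.aleph 1).ord) {p : ℕ} (hp : p ≠ 0) :
    ∃ T : Set (ℕ → Bool), IsClosed T ∧ T.Countable ∧
      (cbDeriv T α).Finite ∧ (cbDeriv T α).ncard = p ∧ ∀ β < α, (cbDeriv T β).Infinite := by
  classical
  obtain ⟨hcl, hct, hder, hinf⟩ := SFam_spec hα
  set A : ℕ → Set (ℕ → Bool) := fun n => if n < p then SFam α else ∅ with hA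
  have hAcl : ∀ n, IsClosed (A n) := by
    intro n
    by_cases h : n < p <;> simp [hA, h, hcl, isClosed_empty]
  have hAfin : {n | (A n).Nonempty}.Finite := by
    refine (Set.finite_Iio p).subset fun n hn => ?_
    rcases hn with ⟨x, hx⟩
    rw [Set.mem_Iio]
    by_contra hnp
    rw [hA] at hx
    simp only [if_neg hnp] at hx
    exact hx
  have hT : ∀ β, cbDeriv (⋃ n, eSeq n '' A n) β = ⋃ n, eSeq n '' cbDeriv (A n) β :=
    cbDeriv_sigmaFin hAcl hAfin
  have hAder : ∀ n β, cbDeriv (A n) β = if n < p then cbDeriv (SFam α) β else ∅ := by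
    intro n β
    by_cases h : n < p
    · simp [hA, h]
    · simp [hA, h, cbDeriv_empty]
  have hinjp : Function.Injective (fun n : ℕ => eSeq n pinf) := by
    intro a b hab
    have h1 : eSeq a pinf ∈ Vcyl b := by
      rw [show eSeq a pinf = eSeq b pinf from hab]
      exact eSeq_mem_Vcyl b _
    exact Vcyl_eq_of_mem (eSeq_mem_Vcyl a _) h1
  have htop : (⋃ n, eSeq n '' cbDeriv (A n) α) = (fun n : ℕ => eSeq n pinf) '' (Set.Iio p) := by
    ext x
    simp only [Set.mem_iUnion, Set.mem_image]
    constructor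
    · rintro ⟨n, y, hy, rfl⟩
      rw [hAder] at hy
      by_cases h : n < p
      · rw [if_pos h, hder, Set.mem_singleton_iff] at hy
        subst hy
        exact ⟨n, Set.mem_Iio.mpr h, rfl⟩
      · rw [if_neg h] at hy
        exact absurd hy (Set.notMem_empty y)
    · rintro ⟨n, hn, rfl⟩
      refine ⟨n, pinf, ?_, rfl⟩
      rw [hAder, if_pos (Set.mem_Iio.mp hn), hder]
      rfl
  refine ⟨⋃ n, eSeq n '' A n, ?_, ?_, ?_, ?_, ?_⟩
  · have heq : (⋃ n, eSeq n '' A n) = ⋃ n ∈ Set.Iio p, eSeq n '' SFam α := by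
      ext x
      simp only [Set.mem_iUnion]
      constructor
      · rintro ⟨n, hx⟩
        by_cases hnp : n < p
        · rw [hA] at hx
          simp only [if_pos hnp] at hx
          exact ⟨n, Set.mem_Iio.mpr hnp, hx⟩
        · rw [hA] at hx
          simp only [if_neg hnp, Set.image_empty] at hx
          exact absurd hx (Set.notMem_empty x)
      · rintro ⟨n, hn, hx⟩
        refine ⟨n, ?_⟩
        rw [hA]
        simpa [if_pos (Set.mem_Iio.mp hn)] using hx
    rw [heq]
    exact (Set.finite_Iio p).isClosed_biUnion fun n _ =>
      (eSeq_isClosedEmbedding n).isClosedMap _ hcl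
  · refine Set.countable_iUnion fun n => Set.Countable.image ?_ _
    by_cases hnp : n < p
    · rw [hA]; simpa [if_pos hnp] using hct
    · rw [hA]; simp [if_neg hnp]
  · rw [hT α, htop]
    exact (Set.finite_Iio p).image _
  · rw [hT α, htop, Set.ncard_image_of_injective _ hinjp, ← Finset.coe_range,
      Set.ncard_coe_finset, Finset.card_range]
  · intro β hβ
    rw [hT β]
    have h0p : 0 < p := Nat.pos_of_ne_zero hp
    refine ((hinf β hβ).image ((eSeq_injective 0).injOn)).mono ?_
    refine Set.Subset.trans ?_ (Set.subset_iUnion (fun n : ℕ => eSeq n '' cbDeriv (A n) β) 0)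
    rw [hAder 0 β, if_pos h0p]

end CBConstr

theorem stmt15 {E : Type*} [TopologicalSpace E] [PolishSpace E] (h : ¬ Countable E)
    (α : Ordinal) (hα : α < (Cardinal.aleph 1).ord) (p : ℕ) (hp : p ≠ 0) :
    ∃ K : Set E, IsCompact K ∧ K.Countable ∧ IsCB K α p := by
  letI := TopologicalSpace.upgradeIsCompletelyMetrizable E
  have huniv : ¬ (Set.univ : Set E).Countable := by
    rw [Set.countable_univ_iff]; exact h
  obtain ⟨f, -, hcont, hinj⟩ := isClosed_univ.exists_nat_bool_injection_of_not_countable huniv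
  have hfemb : IsClosedEmbedding f := hcont.isClosedEmbedding hinj
  obtain ⟨T, hTcl, hTct, hfin, hcard, hinf⟩ := CBConstr.key hα hp
  refine ⟨f '' T, hTcl.isCompact.image hcont, hTct.image f, ?_, ?_, ?_⟩
  · rw [cbDeriv_image hfemb]
    exact hfin.image f
  · intro β hβ hFin
    rw [cbDeriv_image hfemb] at hFin
    exact ((hinf β hβ).image hinj.injOn) hFin
  · rw [cbDeriv_image hfemb, Set.ncard_image_of_injective _ hinj, hcard]
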